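/- Let H be a set of functions X → Bool that separates points, and let x₀, x₁, …, x_k ∈ X be pairwise distinct with x_i ⪯_H x_{i+1} for all 0 ≤ i < k, and suppose there exists c₀ ∈ H with c₀ x₀ = true. Then the thresholds dimension of H is at least k+1; that is, there exist points y₁,…,y_{k+1} ∈ X and concepts d₁,…,d_{k+1} ∈ H with d_i(y_j) = true if and only if j ≥ i. (Consequently, the maximum distance of a point in the tree structure of H is at most the thresholds dimension of H.) -/

import Mathlib

/-- The partial order induced by a concept class `H`. -/
def Prec {X : Type*} (H : Set (X → Bool)) (x₁ x₂ : X) : Prop :=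
  ∀ c ∈ H, c x₁ = true → c x₂ = true

/-- `H` separates points. -/
def SeparatesPts {X : Type*} (H : Set (X → Bool)) : Prop :=
  ∀ x₁ x₂ : X, x₁ ≠ x₂ → ∃ c ∈ H, c x₁ ≠ c x₂

/-- If `H` separates points and `x₀ ⪯_H x₁ ⪯_H ⋯ ⪯_H x_k` are pairwise distinct with
some concept labeling `x₀` true, then the thresholds dimension of `H` is at least
`k + 1`: there is a thresholds class of length `k + 1`. -/
theorem thresholdsDim_ge_of_chain {X : Type*} (H : Set (X → Bool))
    (hsep : SeparatesPts H) (k : ℕ) (x : Fin (k + 1) → X)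
    (hinj : Function.Injective x)
    (hchain : ∀ i : Fin k, Prec H (x i.castSucc) (x i.succ))
    (hbase : ∃ c₀ ∈ H, c₀ (x 0) = true) :
    ∃ (y : Fin (k + 1) → X) (d : Fin (k + 1) → X → Bool),
      (∀ i, d i ∈ H) ∧ ∀ i j : Fin (k + 1), d i (y j) = true ↔ i ≤ j := by
  obtain ⟨c₀, hc₀H, hc₀⟩ := hbase
  have hmonoN : ∀ (b : ℕ) (hb : b < k+1) (i : Fin (k+1)), i.val ≤ b →
      ∀ c ∈ H, c (x i) = true → c (x ⟨b, hb⟩) = true := by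
    intro b
    induction b with
    | zero =>
      intro hb i hi c _ hci
      have : i = ⟨0, hb⟩ := Fin.ext (Nat.le_zero.mp hi)
      rwa [← this]
    | succ b ih =>
      intro hb i hi c hc hci
      rcases Nat.lt_or_ge i.val (b+1) with h | h
      · have hbk : b < k := by omega
        have hcb : c (x ⟨b, by omega⟩) = true :=
          ih (by omega) i (by omega) c hc hci
        have := hchain ⟨b, hbk⟩ c hc
        simp only [Fin.castSucc_mk, Fin.succ_mk] at this
        exact this hcb
      · have : i = ⟨b+1, hb⟩ := Fin.ext (show i.val = b+1 by omega)
        rwa [← this]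
  have hmono : ∀ i j : Fin (k+1), i ≤ j → ∀ c ∈ H, c (x i) = true → c (x j) = true := by
    intro i j hij c hc hci
    have := hmonoN j.val j.isLt i hij c hc hci
    simpa using this
  have key : ∀ i : Fin (k+1), ∃ c ∈ H, ∀ j, c (x j) = true ↔ i ≤ j := by
    intro i
    induction i using Fin.cases with
    | zero =>
      exact ⟨c₀, hc₀H, fun j => ⟨fun _ => Fin.zero_le j,
        fun _ => hmono 0 j (Fin.zero_le j) c₀ hc₀H hc₀⟩⟩
    | succ m =>
      obtain ⟨c, hcH, hne⟩ := hsep (x m.castSucc) (x m.succ)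
        (fun h => by
          have := hinj h
          exact absurd (show m.castSucc < m.succ from Fin.castSucc_lt_succ) (by simp [this]))
      have hcs : c (x m.castSucc) = false := by
        by_contra h
        have h' : c (x m.castSucc) = true := by
          cases hb : c (x m.castSucc) <;> simp_all
        exact hne (h'.trans (hchain m c hcH h').symm)
      have hsu : c (x m.succ) = true := by
        cases hb : c (x m.succ) with
        | true => rfl
        | false => exact absurd (hcs.trans hb.symm) hne
      refine ⟨c, hcH, fun j => ⟨fun hj => ?_, fun hj => hmono m.succ j hj c hcH hsu⟩⟩
      by_contra hlt
      push_neg at hlt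
      have hjm : j ≤ m.castSucc := by
        have := Fin.lt_iff_val_lt_val.mp hlt
        simp [Fin.le_iff_val_le_val, Fin.val_succ] at this ⊢
        omega
      have := hmono j m.castSucc hjm c hcH hj
      simp [hcs] at this
  choose d hdH hd using key
  exact ⟨x, d, hdH, fun i j => hd i j⟩
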